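/- Let γ > 0 and σ₀ > 0, and set σ(t) := (1 − (1 − γσ₀)e^{−2γt})/γ for t ≥ 0 (so σ(t) > 0). Define ρ(x,t) := √((2σ(t) − x²)₊)/(π σ(t)). Then: (i) for every t > 0 and every x with |x| < √(2σ(t)), setting u(x,t) := x/σ(t), the equation ∂_t ρ(x,t) + ∂_x(ρ(x,t)(u(x,t) − γx)) = 0 holds pointwise; (ii) for every x ∈ ℝ, ρ(x,t) → ρ_∞(x) := √((2γ − γ²x²)₊)/π as t → ∞. -/

import Mathlib

open MeasureTheory Filter
open scoped Topology

/-- The explicit semicircle-profile solution of the Dyson equation with harmonic trap: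
(i) the equation `∂ₜρ + ∂ₓ(ρ(u - γx)) = 0` holds pointwise in the interior of the support,
with `u(x,t) = x/σ(t)`; (ii) `ρ(x,t)` converges pointwise to the steady state as `t → ∞`. -/
theorem stmt4 (γ σ₀ : ℝ) (hγ : 0 < γ) (hσ₀ : 0 < σ₀)
    (σ : ℝ → ℝ)
    (hσ : ∀ t : ℝ, σ t = (1 - (1 - γ * σ₀) * Real.exp (-(2 * γ * t))) / γ)
    (ρ : ℝ → ℝ → ℝ)
    (hρ : ∀ x t : ℝ, ρ x t = Real.sqrt (max (2 * σ t - x ^ 2) 0) / (Real.pi * σ t)) :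
    (∀ t : ℝ, 0 < t → ∀ x : ℝ, |x| < Real.sqrt (2 * σ t) →
      ∃ a b : ℝ,
        HasDerivAt (fun s => ρ x s) a t ∧
        HasDerivAt (fun y => ρ y t * (y / σ t - γ * y)) b x ∧
        a + b = 0) ∧
    (∀ x : ℝ, Tendsto (fun t => ρ x t) atTop
      (𝓝 (Real.sqrt (max (2 * γ - γ ^ 2 * x ^ 2) 0) / Real.pi))) := by
  have hπ : Real.pi ≠ 0 := Real.pi_ne_zero
  constructor
  · intro t ht x hx
    set E : ℝ := (1 - γ * σ₀) * Real.exp (-(2 * γ * t)) with hEdef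
    have hexp : Real.exp (-(2 * γ * t)) < 1 := by
      apply Real.exp_lt_one_iff.mpr; nlinarith
    have hexp0 : (0:ℝ) < Real.exp (-(2 * γ * t)) := Real.exp_pos _
    have hE1 : E < 1 := by
      rcases le_or_gt (1 - γ * σ₀) 0 with h | h
      · nlinarith
      · nlinarith
    have hS : 0 < σ t := by
      rw [hσ]; apply div_pos (by rw [hEdef] at hE1; linarith) hγ
    have hSne : σ t ≠ 0 := hS.ne'
    have hD : 0 < 2 * σ t - x ^ 2 := by
      have h := (Real.lt_sqrt (abs_nonneg x)).mp hx
      rw [sq_abs] at h; linarith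
    have hE2 : 2 * E = 2 - 2 * γ * σ t := by
      rw [hσ]; field_simp; rw [hEdef]; ring
    set r : ℝ := Real.sqrt (2 * σ t - x ^ 2) with hrdef
    have hr : 0 < r := Real.sqrt_pos.mpr hD
    have hr2 : r ^ 2 = 2 * σ t - x ^ 2 := Real.sq_sqrt hD.le
    -- derivative of σ
    have hσdiff : HasDerivAt σ (2 * E) t := by
      have h2 : HasDerivAt (fun s : ℝ => -(2 * γ * s)) (-(2 * γ)) t := by
        simpa using ((hasDerivAt_id t).const_mul (-(2 * γ)))
      have h3 := h2.exp
      have h4 := ((h3.const_mul (1 - γ * σ₀)).const_sub 1).div_const γ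
      have hfun : σ = fun s => (1 - (1 - γ * σ₀) * Real.exp (-(2 * γ * s))) / γ :=
        funext hσ
      rw [hfun]
      refine h4.congr_deriv ?_
      rw [hEdef]; rw [eq_comm, eq_div_iff hγ.ne']; ring
    have hσcont : ContinuousAt σ t := hσdiff.continuousAt
    -- derivative in time
    have hinner : HasDerivAt (fun s => 2 * σ s - x ^ 2) (2 * (2 * E)) t :=
      (hσdiff.const_mul 2).sub_const (x ^ 2)
    have hsqt : HasDerivAt (fun s => Real.sqrt (2 * σ s - x ^ 2))
        (1 / (2 * r) * (2 * (2 * E))) t := by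
      have := (Real.hasDerivAt_sqrt hD.ne').comp t hinner
      simpa [Function.comp_def, ← hrdef] using this
    have hden : HasDerivAt (fun s => Real.pi * σ s) (Real.pi * (2 * E)) t :=
      hσdiff.const_mul Real.pi
    have hdenne : Real.pi * σ t ≠ 0 := mul_ne_zero hπ hSne
    have hgood : HasDerivAt (fun s => Real.sqrt (2 * σ s - x ^ 2) / (Real.pi * σ s))
        ((1 / (2 * r) * (2 * (2 * E)) * (Real.pi * σ t) - r * (Real.pi * (2 * E))) /
          (Real.pi * σ t) ^ 2) t := hsqt.div hden hdenne
    have hev : (fun s => ρ x s) =ᶠ[𝓝 t]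
        fun s => Real.sqrt (2 * σ s - x ^ 2) / (Real.pi * σ s) := by
      have hc : ContinuousAt (fun s => 2 * σ s - x ^ 2) t :=
        ((hσcont.const_mul 2).sub continuousAt_const)
      have hmem : ∀ᶠ s in 𝓝 t, (2 * σ s - x ^ 2) ∈ Set.Ioi (0:ℝ) :=
        hc.eventually_mem (isOpen_Ioi.mem_nhds hD)
      filter_upwards [hmem] with s hs
      rw [hρ, max_eq_left (le_of_lt hs)]
    have ha : HasDerivAt (fun s => ρ x s)
        ((1 / (2 * r) * (2 * (2 * E)) * (Real.pi * σ t) - r * (Real.pi * (2 * E))) /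
          (Real.pi * σ t) ^ 2) t := hgood.congr_of_eventuallyEq hev
    -- derivative in space
    have hinx : HasDerivAt (fun y : ℝ => 2 * σ t - y ^ 2) (-(2 * x)) x := by
      simpa using (HasDerivAt.const_sub (2 * σ t) (hasDerivAt_pow 2 x))
    have hsqx : HasDerivAt (fun y => Real.sqrt (2 * σ t - y ^ 2))
        (1 / (2 * r) * (-(2 * x))) x := by
      have := (Real.hasDerivAt_sqrt hD.ne').comp x hinx
      simpa [Function.comp_def, ← hrdef] using this
    have hlin : HasDerivAt (fun y : ℝ => y / σ t - γ * y) (1 / σ t - γ) x := by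
      have h1 : HasDerivAt (fun y : ℝ => y / σ t) (1 / σ t) x := by
        simpa using (hasDerivAt_id x).div_const (σ t)
      have h2 : HasDerivAt (fun y : ℝ => γ * y) γ x := by
        simpa using (hasDerivAt_id x).const_mul γ
      exact h1.sub h2
    have hgoodx : HasDerivAt
        (fun y => Real.sqrt (2 * σ t - y ^ 2) / (Real.pi * σ t) * (y / σ t - γ * y))
        (1 / (2 * r) * (-(2 * x)) / (Real.pi * σ t) * (x / σ t - γ * x) +
          r / (Real.pi * σ t) * (1 / σ t - γ)) x :=
      (hsqx.div_const (Real.pi * σ t)).mul hlin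
    have hevx : (fun y => ρ y t * (y / σ t - γ * y)) =ᶠ[𝓝 x]
        fun y => Real.sqrt (2 * σ t - y ^ 2) / (Real.pi * σ t) * (y / σ t - γ * y) := by
      have hc : ContinuousAt (fun y : ℝ => 2 * σ t - y ^ 2) x := by fun_prop
      have hmem : ∀ᶠ y in 𝓝 x, (2 * σ t - y ^ 2) ∈ Set.Ioi (0:ℝ) :=
        hc.eventually_mem (isOpen_Ioi.mem_nhds hD)
      filter_upwards [hmem] with y hy
      rw [hρ, max_eq_left (le_of_lt hy)]
    have hb : HasDerivAt (fun y => ρ y t * (y / σ t - γ * y))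
        (1 / (2 * r) * (-(2 * x)) / (Real.pi * σ t) * (x / σ t - γ * x) +
          r / (Real.pi * σ t) * (1 / σ t - γ)) x :=
      hgoodx.congr_of_eventuallyEq hevx
    refine ⟨_, _, ha, hb, ?_⟩
    have hE3 : E = 1 - γ * σ t := by linarith
    rw [hE3]
    field_simp
    linear_combination (γ * σ t - 1) * hr2
  · intro x
    have h2γ : Tendsto (fun t : ℝ => 2 * γ * t) atTop atTop :=
      Tendsto.const_mul_atTop (by positivity) tendsto_id
    have hneg : Tendsto (fun t : ℝ => -(2 * γ * t)) atTop atBot :=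
      tendsto_neg_atBot_iff.mpr h2γ
    have hexp0 : Tendsto (fun t : ℝ => Real.exp (-(2 * γ * t))) atTop (𝓝 0) :=
      Real.tendsto_exp_atBot.comp hneg
    have hσlim : Tendsto σ atTop (𝓝 (1 / γ)) := by
      have h1 : Tendsto (fun t : ℝ => (1 - (1 - γ * σ₀) * Real.exp (-(2 * γ * t))) / γ)
          atTop (𝓝 ((1 - (1 - γ * σ₀) * 0) / γ)) :=
        ((tendsto_const_nhds.sub (hexp0.const_mul (1 - γ * σ₀))).div_const γ)
      simpa [hσ] using (funext hσ ▸ (by simpa using h1))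
    have hF : ContinuousAt (fun s : ℝ => Real.sqrt (max (2 * s - x ^ 2) 0) / (Real.pi * s))
        (1 / γ) := by
      apply ContinuousAt.div
      · fun_prop
      · fun_prop
      · exact mul_ne_zero hπ (by positivity)
    have hcomp : Tendsto (fun t => ρ x t) atTop
        (𝓝 (Real.sqrt (max (2 * (1 / γ) - x ^ 2) 0) / (Real.pi * (1 / γ)))) := by
      have := hF.tendsto.comp hσlim
      apply this.congr
      intro t
      simp [Function.comp, hρ]
    convert hcomp using 2
    have hmax : max (2 * γ - γ ^ 2 * x ^ 2) 0 = γ ^ 2 * max (2 * (1 / γ) - x ^ 2) 0 := by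
      rw [mul_max_of_nonneg _ _ (by positivity : (0:ℝ) ≤ γ ^ 2)]
      congr 1
      · field_simp
      · ring
    rw [hmax, Real.sqrt_mul (by positivity), Real.sqrt_sq hγ.le]
    field_simp
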